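/- Let $f, g : \mathbb{R} \to \mathbb{R}$ be $C^2$ with second derivatives in $[C_1, C_2]$ for $0 < C_1 \le C_2$, attaining minimum value $0$ at $\theta_f, \theta_g$ respectively. Denote by $f_+^{-1}$ and $g_+^{-1}$ the inverses of $f$ and $g$ restricted to $[\theta_f, \infty)$ and $[\theta_g, \infty)$ respectively. Then for all $a, b \ge 0$, $|g_+^{-1}(a) - g_+^{-1}(b)| \le (C_2/C_1)^{3/2} |f_+^{-1}(a) - f_+^{-1}(b)|$. -/

import Mathlib

/-- Key estimate: if `f` is `C²` with second derivative in `[C1, C2]` and minimum at `θ`,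
then for `θ ≤ y ≤ x` the increment `f x - f y` is comparable to the increment of the
quadratic models. -/
lemma aux_incr_bound (f : ℝ → ℝ) (C1 C2 θ : ℝ)
    (hf : ContDiff ℝ 2 f)
    (hf'' : ∀ u, deriv (deriv f) u ∈ Set.Icc C1 C2)
    (hmin : ∀ u, f θ ≤ f u) :
    ∀ ⦃y x : ℝ⦄, θ ≤ y → y ≤ x →
      C1/2 * ((x-θ)^2 - (y-θ)^2) ≤ f x - f y ∧ f x - f y ≤ C2/2 * ((x-θ)^2 - (y-θ)^2) := by
  have hfd : Differentiable ℝ f := hf.differentiable (by norm_num)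
  have h2 : ContDiff ℝ ((1:ℕ) + 1) f := hf
  have hfd' : Differentiable ℝ (deriv f) :=
    ((contDiff_succ_iff_deriv.mp h2).2.2).differentiable (by norm_num)
  have hθ : deriv f θ = 0 :=
    IsLocalMin.deriv_eq_zero (Filter.Eventually.of_forall hmin)
  -- bounds on deriv f
  have hlow : ∀ u, θ ≤ u → C1 * (u - θ) ≤ deriv f u := by
    intro u hu
    have hmono : Monotone (fun v => deriv f v - C1 * v) := by
      apply monotone_of_deriv_nonneg
      · exact hfd'.sub (differentiable_id.const_mul C1)
      · intro x
        have h1 : HasDerivAt (fun v => deriv f v - C1 * v) (deriv (deriv f) x - C1 * 1) x :=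
          ((hfd' x).hasDerivAt).sub ((hasDerivAt_id x).const_mul C1)
        rw [h1.deriv]
        have := (hf'' x).1; linarith
    have h := hmono hu
    simp only [hθ] at h
    nlinarith [h]
  have hhigh : ∀ u, θ ≤ u → deriv f u ≤ C2 * (u - θ) := by
    intro u hu
    have hmono : Monotone (fun v => C2 * v - deriv f v) := by
      apply monotone_of_deriv_nonneg
      · exact (differentiable_id.const_mul C2).sub hfd'
      · intro x
        have h1 : HasDerivAt (fun v => C2 * v - deriv f v) (C2 * 1 - deriv (deriv f) x) x :=
          ((hasDerivAt_id x).const_mul C2).sub ((hfd' x).hasDerivAt)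
        rw [h1.deriv]
        have := (hf'' x).2; linarith
    have h := hmono hu
    simp only [hθ] at h
    nlinarith [h]
  intro y x hy hxy
  constructor
  · have hm : MonotoneOn (fun u => f u - C1/2 * (u - θ)^2) (Set.Ici θ) := by
      apply monotoneOn_of_deriv_nonneg (convex_Ici θ)
      · exact (hfd.sub (by fun_prop)).continuous.continuousOn
      · exact (hfd.sub (by fun_prop)).differentiableOn
      · intro u hu
        rw [interior_Ici] at hu
        have h1 : HasDerivAt (fun u => f u - C1/2 * (u - θ)^2)
            (deriv f u - C1/2 * (2 * (u - θ)^1 * 1)) u :=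
          (hfd u).hasDerivAt.sub ((((hasDerivAt_id u).sub_const θ).pow 2).const_mul (C1/2))
        rw [h1.deriv]
        have := hlow u (le_of_lt hu)
        simp only [pow_one, mul_one]
        linarith
    have h := hm (Set.mem_Ici.mpr hy) (Set.mem_Ici.mpr (hy.trans hxy)) hxy
    simp only at h
    linarith
  · have hm : MonotoneOn (fun u => C2/2 * (u - θ)^2 - f u) (Set.Ici θ) := by
      apply monotoneOn_of_deriv_nonneg (convex_Ici θ)
      · exact ((by fun_prop : Differentiable ℝ fun u : ℝ => C2/2 * (u - θ)^2).sub hfd).continuous.continuousOn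
      · exact ((by fun_prop : Differentiable ℝ fun u : ℝ => C2/2 * (u - θ)^2).sub hfd).differentiableOn
      · intro u hu
        rw [interior_Ici] at hu
        have h1 : HasDerivAt (fun u => C2/2 * (u - θ)^2 - f u)
            (C2/2 * (2 * (u - θ)^1 * 1) - deriv f u) u :=
          ((((hasDerivAt_id u).sub_const θ).pow 2).const_mul (C2/2)).sub (hfd u).hasDerivAt
        rw [h1.deriv]
        have := hhigh u (le_of_lt hu)
        simp only [pow_one, mul_one]
        linarith
    have h := hm (Set.mem_Ici.mpr hy) (Set.mem_Ici.mpr (hy.trans hxy)) hxy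
    simp only at h
    linarith

lemma aux_le_of_sq_le_sq {a c : ℝ} (ha : 0 ≤ a) (hc : 0 ≤ c) (h : a^2 ≤ c^2) : a ≤ c := by
  nlinarith

set_option maxHeartbeats 1000000 in
/-- Core one-sided statement, assuming `b ≤ a`. -/
lemma aux_core (f g finv ginv : ℝ → ℝ) (C1 C2 θf θg : ℝ)
    (hC1 : 0 < C1) (hC12 : C1 ≤ C2)
    (hf : ContDiff ℝ 2 f) (hg : ContDiff ℝ 2 g)
    (hf'' : ∀ u, deriv (deriv f) u ∈ Set.Icc C1 C2)
    (hg'' : ∀ u, deriv (deriv g) u ∈ Set.Icc C1 C2)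
    (hfθ : f θf = 0) (hgθ : g θg = 0)
    (hfmin : ∀ u, 0 ≤ f u) (hgmin : ∀ u, 0 ≤ g u)
    (hfinv : ∀ a : ℝ, 0 ≤ a → θf ≤ finv a ∧ f (finv a) = a)
    (hginv : ∀ a : ℝ, 0 ≤ a → θg ≤ ginv a ∧ g (ginv a) = a)
    (a b : ℝ) (hb : 0 ≤ b) (hba : b ≤ a) :
    finv b ≤ finv a ∧ ginv b ≤ ginv a ∧
      ginv a - ginv b ≤ (C2 / C1) ^ ((3 : ℝ) / 2) * (finv a - finv b) := by
  have ha : 0 ≤ a := hb.trans hba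
  have Af := aux_incr_bound f C1 C2 θf hf hf'' (by intro u; rw [hfθ]; exact hfmin u)
  have Ag := aux_incr_bound g C1 C2 θg hg hg'' (by intro u; rw [hgθ]; exact hgmin u)
  obtain ⟨hx, hfx⟩ := hfinv a ha
  obtain ⟨hy, hfy⟩ := hfinv b hb
  obtain ⟨hX, hgX⟩ := hginv a ha
  obtain ⟨hY, hgY⟩ := hginv b hb
  set x := finv a; set y := finv b; set X := ginv a; set Y := ginv b
  -- monotonicity of the inverses
  have hyx : y ≤ x := by
    by_contra hcon
    push_neg at hcon
    have h := (Af hx hcon.le).1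
    rw [hfy, hfx] at h
    have hp : 0 < y + x - 2*θf := by linarith
    nlinarith [mul_pos hC1 (mul_pos (sub_pos.mpr hcon) hp)]
  have hYX : Y ≤ X := by
    by_contra hcon
    push_neg at hcon
    have h := (Ag hX hcon.le).1
    rw [hgY, hgX] at h
    have hp : 0 < Y + X - 2*θg := by linarith
    nlinarith [mul_pos hC1 (mul_pos (sub_pos.mpr hcon) hp)]
  refine ⟨hyx, hYX, ?_⟩
  -- increment comparison
  have h1 : a - b ≤ C2/2 * ((x-θf)^2 - (y-θf)^2) := by
    have := (Af hy hyx).2; rw [hfx, hfy] at this; exact this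
  have h2 : C1/2 * ((X-θg)^2 - (Y-θg)^2) ≤ a - b := by
    have := (Ag hY hYX).1; rw [hgX, hgY] at this; exact this
  -- pointwise comparisons
  have h3 : C1/2 * (x-θf)^2 ≤ a := by
    have := (Af (le_refl θf) hx).1; rw [hfx, hfθ] at this
    simp only [sub_self] at this; nlinarith [this]
  have h4 : a ≤ C2/2 * (X-θg)^2 := by
    have := (Ag (le_refl θg) hX).2; rw [hgX, hgθ] at this
    simp only [sub_self] at this; nlinarith [this]
  have h5 : C1/2 * (y-θf)^2 ≤ b := by
    have := (Af (le_refl θf) hy).1; rw [hfy, hfθ] at this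
    simp only [sub_self] at this; nlinarith [this]
  have h6 : b ≤ C2/2 * (Y-θg)^2 := by
    have := (Ag (le_refl θg) hY).2; rw [hgY, hgθ] at this
    simp only [sub_self] at this; nlinarith [this]
  set K := Real.sqrt (C2/C1) with hK
  have hr0 : (0:ℝ) ≤ C2/C1 := div_nonneg (hC1.le.trans hC12) hC1.le
  have hK0 : 0 ≤ K := Real.sqrt_nonneg _
  have hK2 : K^2 = C2/C1 := Real.sq_sqrt hr0
  have hKpow : (C2 / C1) ^ ((3 : ℝ) / 2) = K^3 := by
    rw [hK, Real.sqrt_eq_rpow, ← Real.rpow_natCast ((C2/C1) ^ ((1:ℝ)/2)) 3,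
      ← Real.rpow_mul hr0]
    norm_num
  rw [hKpow]
  have hsx : 0 ≤ x - θf := sub_nonneg.mpr hx
  have hsy : 0 ≤ y - θf := sub_nonneg.mpr hy
  have hSX : 0 ≤ X - θg := sub_nonneg.mpr hX
  have hSY : 0 ≤ Y - θg := sub_nonneg.mpr hY
  -- s ≤ K S, t ≤ K T
  have hs : x - θf ≤ K * (X - θg) := by
    apply aux_le_of_sq_le_sq hsx (mul_nonneg hK0 hSX)
    have hK2' : K^2 * (X - θg)^2 = (C2/C1) * (X-θg)^2 := by rw [hK2]
    rw [mul_pow, hK2']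
    rw [← sub_nonneg]
    have : C2/C1 * (X - θg)^2 - (x - θf)^2 = (C2 * (X-θg)^2 - C1 * (x-θf)^2) / C1 := by
      field_simp; try ring
    rw [this]
    apply div_nonneg _ hC1.le
    nlinarith [h3, h4]
  have ht : y - θf ≤ K * (Y - θg) := by
    apply aux_le_of_sq_le_sq hsy (mul_nonneg hK0 hSY)
    have hK2' : K^2 * (Y - θg)^2 = (C2/C1) * (Y-θg)^2 := by rw [hK2]
    rw [mul_pow, hK2']
    rw [← sub_nonneg]
    have : C2/C1 * (Y - θg)^2 - (y - θf)^2 = (C2 * (Y-θg)^2 - C1 * (y-θf)^2) / C1 := by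
      field_simp; try ring
    rw [this]
    apply div_nonneg _ hC1.le
    nlinarith [h5, h6]
  -- main combination
  have e1 : (X-θg)^2 - (Y-θg)^2 ≤ K^2 * ((x-θf)^2 - (y-θf)^2) := by
    rw [hK2]
    rw [← sub_nonneg]
    have : C2/C1 * ((x-θf)^2 - (y-θf)^2) - ((X-θg)^2 - (Y-θg)^2)
        = (C2 * ((x-θf)^2 - (y-θf)^2) - C1 * ((X-θg)^2 - (Y-θg)^2)) / C1 := by
      field_simp; try ring
    rw [this]
    apply div_nonneg _ hC1.le
    nlinarith [h1, h2]
  rcases eq_or_lt_of_le (add_nonneg hSY hSX) with hST | hST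
  · -- S + T = 0, so X = θg = Y
    have hS0 : X - θg = 0 := by linarith [hSX, hSY, hST]
    have hT0 : Y - θg = 0 := by linarith [hSX, hSY, hST]
    have : X - Y = 0 := by linarith
    rw [this]
    exact mul_nonneg (pow_nonneg hK0 3) (sub_nonneg.mpr hyx)
  · have hst : 0 ≤ x - y := sub_nonneg.mpr hyx
    have e2 : (x - θf) + (y - θf) ≤ K * ((X - θg) + (Y - θg)) := by
      have : K * ((X - θg) + (Y - θg)) = K * (X - θg) + K * (Y - θg) := by ring
      linarith [hs, ht]
    have e2' : K^2*(x-y)*((x - θf) + (y - θf)) ≤ K^2*(x-y)*(K * ((X - θg) + (Y - θg))) :=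
      mul_le_mul_of_nonneg_left e2 (mul_nonneg (sq_nonneg K) hst)
    have e3 : (X - Y) * ((X - θg) + (Y - θg)) ≤ (K^3 * (x - y)) * ((X - θg) + (Y - θg)) := by
      calc (X - Y) * ((X - θg) + (Y - θg)) = (X-θg)^2 - (Y-θg)^2 := by ring
        _ ≤ K^2 * ((x-θf)^2 - (y-θf)^2) := e1
        _ = K^2*(x-y)*((x - θf) + (y - θf)) := by ring
        _ ≤ K^2*(x-y)*(K * ((X - θg) + (Y - θg))) := e2'
        _ = (K^3 * (x - y)) * ((X - θg) + (Y - θg)) := by ring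
    exact le_of_mul_le_mul_right e3 (by linarith)

theorem stmt1 (f g finv ginv : ℝ → ℝ) (C1 C2 θf θg : ℝ)
    (hC1 : 0 < C1) (hC12 : C1 ≤ C2)
    (hf : ContDiff ℝ 2 f) (hg : ContDiff ℝ 2 g)
    (hf'' : ∀ u, deriv (deriv f) u ∈ Set.Icc C1 C2)
    (hg'' : ∀ u, deriv (deriv g) u ∈ Set.Icc C1 C2)
    (hfθ : f θf = 0) (hgθ : g θg = 0)
    (hfmin : ∀ u, 0 ≤ f u) (hgmin : ∀ u, 0 ≤ g u)
    (hfinv : ∀ a : ℝ, 0 ≤ a → θf ≤ finv a ∧ f (finv a) = a)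
    (hginv : ∀ a : ℝ, 0 ≤ a → θg ≤ ginv a ∧ g (ginv a) = a) :
    ∀ a b : ℝ, 0 ≤ a → 0 ≤ b →
      |ginv a - ginv b| ≤ (C2 / C1) ^ ((3 : ℝ) / 2) * |finv a - finv b| := by
  intro a b ha hb
  rcases le_total b a with hba | hab
  · obtain ⟨hfab, hgab, hkey⟩ := aux_core f g finv ginv C1 C2 θf θg hC1 hC12 hf hg hf'' hg''
      hfθ hgθ hfmin hgmin hfinv hginv a b hb hba
    rw [abs_of_nonneg (sub_nonneg.mpr hgab), abs_of_nonneg (sub_nonneg.mpr hfab)]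
    exact hkey
  · obtain ⟨hfab, hgab, hkey⟩ := aux_core f g finv ginv C1 C2 θf θg hC1 hC12 hf hg hf'' hg''
      hfθ hgθ hfmin hgmin hfinv hginv b a ha hab
    rw [abs_sub_comm (ginv a), abs_sub_comm (finv a),
      abs_of_nonneg (sub_nonneg.mpr hgab), abs_of_nonneg (sub_nonneg.mpr hfab)]
    exact hkey
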